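/- Let ψ(t) = 1/log(e/t) on (0,1), and let C denote the Cesàro operator (Cw)(s) = (1/s)∫_0^s w(u)du. Then for every w ∈ Λ_ψ(0,1), ∫_0^1 [sup_{0<s<t} ψ(s)² (Cμ(w))(s)] dt/t ≤ 3 ‖w‖_{Λ_ψ}, where ‖w‖_{Λ_ψ} = ∫_0^1 μ(s,w)dψ(s). -/

import Mathlib

open MeasureTheory Set ENNReal

/-- Lebesgue measure on `(0,1)`. -/
noncomputable def nu : Measure ℝ := volume.restrict (Set.Ioo 0 1)

/-- Decreasing rearrangement of a function on `(0,1)`. -/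
noncomputable def mu (f : ℝ → ℝ) (t : ℝ) : ℝ :=
  sInf {s : ℝ | 0 ≤ s ∧ nu {u | s < |f u|} ≤ ENNReal.ofReal t}

/-- `ψ(t) = 1/log(e/t)`. -/
noncomputable def psi (t : ℝ) : ℝ := 1 / Real.log (Real.exp 1 / t)

/-- The Cesàro operator `(Cw)(s) = (1/s) ∫_0^s w(u) du`. -/
noncomputable def Ces (w : ℝ → ℝ) (s : ℝ) : ℝ := (∫ u in Set.Ioc (0:ℝ) s, w u) / s


lemma psi_eq {t : ℝ} (ht : 0 < t) : psi t = (1 - Real.log t)⁻¹ := by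
  unfold psi
  rw [Real.log_div (Real.exp_ne_zero 1) (ne_of_gt ht), Real.log_exp, one_div]

lemma one_sub_log_pos {t : ℝ} (ht : 0 < t) (ht1 : t ≤ 1) : 0 < 1 - Real.log t := by
  have : Real.log t ≤ 0 := Real.log_nonpos (le_of_lt ht) ht1
  linarith

lemma psi_pos {t : ℝ} (ht : 0 < t) (ht1 : t ≤ 1) : 0 < psi t := by
  rw [psi_eq ht]; exact inv_pos.2 (one_sub_log_pos ht ht1)

lemma psi_nonneg {t : ℝ} (ht : 0 ≤ t) (ht1 : t ≤ 1) : 0 ≤ psi t := by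
  rcases eq_or_lt_of_le ht with h | h
  · simp [psi, ← h]
  · exact le_of_lt (psi_pos h ht1)

lemma psi_le_one {t : ℝ} (ht : 0 < t) (ht1 : t ≤ 1) : psi t ≤ 1 := by
  rw [psi_eq ht]
  have h := one_sub_log_pos ht ht1
  rw [inv_le_one_iff₀]
  right
  have : Real.log t ≤ 0 := Real.log_nonpos (le_of_lt ht) ht1
  linarith

lemma psi_mono {s t : ℝ} (hs : 0 < s) (hst : s ≤ t) (ht1 : t ≤ 1) : psi s ≤ psi t := by
  have ht : 0 < t := lt_of_lt_of_le hs hst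
  rw [psi_eq hs, psi_eq ht]
  have h1 := one_sub_log_pos ht ht1
  have h2 : Real.log s ≤ Real.log t := Real.log_le_log hs hst
  apply inv_anti₀ h1
  linarith

lemma sq_le_exp {x : ℝ} (hx : 1 ≤ x) : x ^ 2 ≤ 4 * Real.exp (x - 2) := by
  have h1 : (x - 2) / 2 + 1 ≤ Real.exp ((x - 2) / 2) := Real.add_one_le_exp _
  have h2 : Real.exp ((x - 2) / 2) ^ 2 = Real.exp (x - 2) := by
    rw [← Real.exp_nat_mul]; ring_nf
  nlinarith [Real.exp_pos ((x - 2) / 2)]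

lemma h_le {u : ℝ} (hu : 0 < u) (hu1 : u ≤ 1) :
    u * (1 - Real.log u) ^ 2 ≤ 4 / Real.exp 1 := by
  set x := 1 - Real.log u with hxdef
  have hx : 1 ≤ x := by
    have : Real.log u ≤ 0 := Real.log_nonpos (le_of_lt hu) hu1
    simp [hxdef]; linarith
  have hu' : u = Real.exp (1 - x) := by
    rw [hxdef]; simp [Real.exp_log hu]
  have h1 := sq_le_exp hx
  rw [hu']
  have h2 : Real.exp (1 - x) * x ^ 2 ≤ Real.exp (1 - x) * (4 * Real.exp (x - 2)) :=
    mul_le_mul_of_nonneg_left h1 (le_of_lt (Real.exp_pos _))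
  calc Real.exp (1 - x) * x ^ 2 ≤ Real.exp (1 - x) * (4 * Real.exp (x - 2)) := h2
    _ = 4 * (Real.exp (1 - x) * Real.exp (x - 2)) := by ring
    _ = 4 * Real.exp (-1) := by rw [← Real.exp_add]; norm_num
    _ = 4 / Real.exp 1 := by rw [Real.exp_neg]; ring

lemma h_mono_low {a s : ℝ} (ha : 0 < a) (has : a ≤ s) (hs : s ≤ (Real.exp 1)⁻¹) :
    a * (1 - Real.log a) ^ 2 ≤ s * (1 - Real.log s) ^ 2 := by
  have hs0 : 0 < s := lt_of_lt_of_le ha has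
  set d := Real.log s - Real.log a with hd
  have hd0 : 0 ≤ d := by
    have := Real.log_le_log ha has; simp [hd]; linarith
  set y := 1 - Real.log s with hy
  have hy2 : 2 ≤ y := by
    have : Real.log s ≤ Real.log (Real.exp 1)⁻¹ := Real.log_le_log hs0 hs
    rw [Real.log_inv, Real.log_exp] at this
    simp [hy]; linarith
  have ha' : a = s * Real.exp (-d) := by
    rw [hd, neg_sub, Real.exp_sub, Real.exp_log hs0, Real.exp_log ha]
    field_simp
  have hone : 1 - Real.log a = y + d := by rw [hy, hd]; ring
  rw [hone, ha']
  -- goal : s * exp(-d) * (y+d)^2 ≤ s * y^2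
  have key : Real.exp (-d) * (y + d) ^ 2 ≤ y ^ 2 := by
    have h1 : 1 + d / 2 ≤ Real.exp (d / 2) := by
      have := Real.add_one_le_exp (d / 2); linarith
    have h2 : y + d ≤ y * Real.exp (d / 2) := by nlinarith
    have h3 : (y + d) ^ 2 ≤ (y * Real.exp (d / 2)) ^ 2 := by
      apply sq_le_sq' <;> nlinarith [Real.exp_pos (d / 2)]
    have h4 : Real.exp (d / 2) * Real.exp (d / 2) = Real.exp d := by
      rw [← Real.exp_add]; ring_nf
    have h5 : Real.exp (-d) * Real.exp d = 1 := by
      rw [← Real.exp_add]; simp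
    have h6 : (y * Real.exp (d / 2)) ^ 2 = y ^ 2 * Real.exp d := by
      rw [mul_pow, pow_two (Real.exp (d / 2)), h4]
    have h7 : Real.exp (-d) * (y + d) ^ 2 ≤ Real.exp (-d) * (y ^ 2 * Real.exp d) :=
      mul_le_mul_of_nonneg_left (h6 ▸ h3) (Real.exp_pos _).le
    have h8 : Real.exp (-d) * (y ^ 2 * Real.exp d) = y ^ 2 := by
      rw [show Real.exp (-d) * (y ^ 2 * Real.exp d) = y ^ 2 * (Real.exp (-d) * Real.exp d) from by ring, h5, mul_one]
    linarith
  nlinarith [key, hs0.le]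

lemma h_anti_high {s t : ℝ} (hs : (Real.exp 1)⁻¹ ≤ s) (hst : s ≤ t) (ht : t ≤ 1) :
    t * (1 - Real.log t) ^ 2 ≤ s * (1 - Real.log s) ^ 2 := by
  have he : (0:ℝ) < (Real.exp 1)⁻¹ := inv_pos.2 (Real.exp_pos 1)
  have hs0 : 0 < s := lt_of_lt_of_le he hs
  have ht0 : 0 < t := lt_of_lt_of_le hs0 hst
  set d := Real.log t - Real.log s with hd
  have hd0 : 0 ≤ d := by have := Real.log_le_log hs0 hst; simp [hd]; linarith
  set y := 1 - Real.log t with hy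
  set x := 1 - Real.log s with hx
  have hy1 : 1 ≤ y := by
    have : Real.log t ≤ 0 := Real.log_nonpos ht0.le ht
    simp [hy]; linarith
  have hx2 : x ≤ 2 := by
    have : Real.log (Real.exp 1)⁻¹ ≤ Real.log s := Real.log_le_log he hs
    rw [Real.log_inv, Real.log_exp] at this
    simp [hx]; linarith
  have hxy : x = y + d := by rw [hx, hy, hd]; ring
  have ht' : t = s * Real.exp d := by
    rw [hd, Real.exp_sub, Real.exp_log hs0, Real.exp_log ht0]
    field_simp
  rw [ht', hxy]
  -- goal: s * exp d * y^2 ≤ s * (y+d)^2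
  have hd2 : d ≤ 2 - y := by rw [hxy] at hx2; linarith
  have key : Real.exp d * y ^ 2 ≤ (y + d) ^ 2 := by
    have hinv : 1 - d/2 ≤ Real.exp (-(d/2)) := by
      have := Real.add_one_le_exp (-(d/2)); linarith
    have hpos : (0:ℝ) < 1 - d/2 := by nlinarith
    have hprod : Real.exp (d/2) * Real.exp (-(d/2)) = 1 := by
      rw [← Real.exp_add]; simp
    have h2 : Real.exp (d/2) * (1 - d/2) ≤ 1 := by
      nlinarith [Real.exp_pos (d/2)]
    have h1 : Real.exp (d/2) * y ≤ y + d := by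
      nlinarith [Real.exp_pos (d/2), mul_pos (Real.exp_pos (d/2)) hpos]
    have h5 : (Real.exp (d/2) * y) ^ 2 ≤ (y + d) ^ 2 := by
      apply sq_le_sq' <;> nlinarith [Real.exp_pos (d/2)]
    have h4 : Real.exp (d/2) * Real.exp (d/2) = Real.exp d := by
      rw [← Real.exp_add]; ring_nf
    have h6 : (Real.exp (d/2) * y) ^ 2 = Real.exp d * y ^ 2 := by
      rw [mul_pow, pow_two (Real.exp (d/2)), h4]
    rw [← h6]; exact h5
  nlinarith [hs0.le]

lemma lint_Ioo_eq {a b : ℝ} (hab : a ≤ b) {g G : ℝ → ℝ}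
    (hderiv : ∀ t ∈ Icc a b, HasDerivAt G (g t) t)
    (hgc : ContinuousOn g (Icc a b)) (hg0 : ∀ t ∈ Icc a b, 0 ≤ g t) :
    ∫⁻ t in Ioo a b, ENNReal.ofReal (g t) = ENNReal.ofReal (G b - G a) := by
  have huIcc : uIcc a b = Icc a b := uIcc_of_le hab
  have hint : IntervalIntegrable g volume a b := by
    apply ContinuousOn.intervalIntegrable; rwa [huIcc]
  have hFTC : ∫ t in a..b, g t = G b - G a :=
    intervalIntegral.integral_eq_sub_of_hasDerivAt (fun x hx => hderiv x (huIcc ▸ hx)) hint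
  rw [intervalIntegral.integral_of_le hab] at hFTC
  rw [Measure.restrict_congr_set Ioo_ae_eq_Ioc, ← hFTC]
  rw [← ofReal_integral_eq_lintegral_ofReal hint.1]
  exact (ae_restrict_iff' measurableSet_Ioc).2
    (ae_of_all _ fun t ht => hg0 t (Ioc_subset_Icc_self ht))

lemma ftc_psi {a b : ℝ} (ha : 0 < a) (hab : a ≤ b) (hb : b ≤ 1) :
    ∫⁻ t in Ioo a b, ENNReal.ofReal (psi t ^ 2 / t) = ENNReal.ofReal (psi b - psi a) := by
  have hb0 : 0 < b := lt_of_lt_of_le ha hab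
  have key : ∫⁻ t in Ioo a b, ENNReal.ofReal (((1 - Real.log t) ^ 2 * t)⁻¹)
      = ENNReal.ofReal ((1 - Real.log b)⁻¹ - (1 - Real.log a)⁻¹) := by
    apply lint_Ioo_eq hab (G := fun t => (1 - Real.log t)⁻¹)
    · intro t ht
      have ht0 : 0 < t := lt_of_lt_of_le ha ht.1
      have ht1 : t ≤ 1 := le_trans ht.2 hb
      have hne : 1 - Real.log t ≠ 0 := ne_of_gt (one_sub_log_pos ht0 ht1)
      have hl : HasDerivAt (fun t : ℝ => 1 - Real.log t) (-t⁻¹) t :=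
        (Real.hasDerivAt_log (ne_of_gt ht0)).const_sub 1
      have := hl.inv hne
      refine this.congr_deriv ?_
      field_simp
    · apply ContinuousOn.inv₀
      · exact ((continuousOn_const.sub (Real.continuousOn_log.mono (fun t ht =>
          ne_of_gt (lt_of_lt_of_le ha ht.1)))).pow 2).mul continuousOn_id
      · intro t ht
        have ht0 : 0 < t := lt_of_lt_of_le ha ht.1
        have := one_sub_log_pos ht0 (le_trans ht.2 hb)
        positivity
    · intro t ht
      have ht0 : 0 < t := lt_of_lt_of_le ha ht.1
      have := one_sub_log_pos ht0 (le_trans ht.2 hb)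
      positivity
  rw [← psi_eq ha, ← psi_eq hb0] at key
  rw [← key]
  apply setLIntegral_congr_fun measurableSet_Ioo
  intro t ht
  dsimp only
  have ht0 : 0 < t := lt_of_lt_of_le ha ht.1.le
  rw [psi_eq ht0, div_eq_mul_inv, inv_pow, ← mul_inv]

lemma ftc_log {a b c : ℝ} (ha : 0 < a) (hab : a ≤ b) (hc : 0 ≤ c) :
    ∫⁻ t in Ioo a b, ENNReal.ofReal (c / t)
      = ENNReal.ofReal (c * (Real.log b - Real.log a)) := by
  have key : ∫⁻ t in Ioo a b, ENNReal.ofReal (c / t)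
      = ENNReal.ofReal (c * Real.log b - c * Real.log a) := by
    apply lint_Ioo_eq hab (G := fun t => c * Real.log t)
    · intro t ht
      have ht0 : 0 < t := lt_of_lt_of_le ha ht.1
      have := (Real.hasDerivAt_log (ne_of_gt ht0)).const_mul c
      rw [div_eq_mul_inv]; exact this
    · exact continuousOn_const.div continuousOn_id
        (fun t ht => ne_of_gt (lt_of_lt_of_le ha ht.1))
    · intro t ht
      have ht0 : 0 < t := lt_of_lt_of_le ha ht.1
      positivity
  rw [key]; ring_nf

lemma ftc_invsq {a b c : ℝ} (ha : 0 < a) (hab : a ≤ b) (hc : 0 ≤ c) :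
    ∫⁻ t in Ioo a b, ENNReal.ofReal (c / t ^ 2)
      = ENNReal.ofReal (c / a - c / b) := by
  have key : ∫⁻ t in Ioo a b, ENNReal.ofReal (c / t ^ 2)
      = ENNReal.ofReal ((-(c * b⁻¹)) - (-(c * a⁻¹))) := by
    apply lint_Ioo_eq hab (G := fun t => -(c * t⁻¹))
    · intro t ht
      have ht0 : 0 < t := lt_of_lt_of_le ha ht.1
      have := ((hasDerivAt_inv (ne_of_gt ht0)).const_mul c).neg
      refine this.congr_deriv ?_
      field_simp
    · exact continuousOn_const.div (continuousOn_pow 2)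
        (fun t ht => by have := lt_of_lt_of_le ha ht.1; positivity)
    · intro t ht
      have ht0 : 0 < t := lt_of_lt_of_le ha ht.1
      positivity
  rw [key]
  congr 1
  field_simp
  ring

lemma mu_nonneg (w : ℝ → ℝ) (t : ℝ) : 0 ≤ mu w t :=
  Real.sInf_nonneg (fun _ hx => hx.1)

lemma nu_ne_top (S : Set ℝ) : nu S ≠ ⊤ := by
  apply ne_of_lt
  calc nu S ≤ nu univ := measure_mono (subset_univ S)
    _ = volume (Ioo (0:ℝ) 1) := by rw [nu, Measure.restrict_apply_univ]
    _ = ENNReal.ofReal 1 := by rw [Real.volume_Ioo, sub_zero]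
    _ < ⊤ := ENNReal.ofReal_lt_top

lemma mu_set_nonempty (w : ℝ → ℝ) (hw : Measurable w) {t : ℝ} (ht : 0 < t) :
    {s : ℝ | 0 ≤ s ∧ nu {u | s < |w u|} ≤ ENNReal.ofReal t}.Nonempty := by
  have hmeas : ∀ n : ℕ, NullMeasurableSet {u : ℝ | (n:ℝ) < |w u|} nu := by
    intro n
    exact (measurableSet_lt measurable_const hw.abs).nullMeasurableSet
  have hant : Antitone (fun n : ℕ => {u : ℝ | (n:ℝ) < |w u|}) := by
    intro n m hnm u hu
    simp only [mem_setOf_eq] at hu ⊢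
    exact lt_of_le_of_lt (Nat.cast_le.mpr hnm) hu
  have hiInter : (⋂ n : ℕ, {u : ℝ | (n:ℝ) < |w u|}) = ∅ := by
    ext u
    simp only [mem_iInter, mem_empty_iff_false, iff_false, not_forall]
    obtain ⟨n, hn⟩ := exists_nat_gt (|w u|)
    exact ⟨n, by simp [not_lt.2 hn.le]⟩
  have := tendsto_measure_iInter_atTop (μ := nu) hmeas hant ⟨0, nu_ne_top _⟩
  rw [hiInter, measure_empty] at this
  have hpos : (0:ℝ≥0∞) < ENNReal.ofReal t := ENNReal.ofReal_pos.2 ht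
  have hev := this.eventually_le_const hpos
  obtain ⟨n, hn⟩ := hev.exists
  exact ⟨n, Nat.cast_nonneg n, hn⟩

lemma mu_antitoneOn (w : ℝ → ℝ) (hw : Measurable w) : AntitoneOn (mu w) (Ioi 0) := by
  intro s hs t ht hst
  apply csInf_le_csInf ⟨0, fun x hx => hx.1⟩ (mu_set_nonempty w hw hs)
  intro x hx
  exact ⟨hx.1, le_trans hx.2 (ENNReal.ofReal_le_ofReal hst)⟩

lemma meas_squeeze {S : Set ℝ} {c : ℝ} (hc : 0 ≤ c)
    (h1 : Ioo 0 c ⊆ S) (h2 : S ⊆ Ioc 0 c) : volume S = ENNReal.ofReal c := by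
  apply le_antisymm
  · calc volume S ≤ volume (Ioc 0 c) := measure_mono h2
      _ = ENNReal.ofReal c := by rw [Real.volume_Ioc, sub_zero]
  · calc ENNReal.ofReal c = volume (Ioo 0 c) := by rw [Real.volume_Ioo, sub_zero]
      _ ≤ volume S := measure_mono h1

/-- sandwich for the level sets of an antitone function -/
lemma level_sandwich {f : ℝ → ℝ} (hanti : AntitoneOn f (Ioi 0)) (lam : ℝ) :
    ∃ c : ℝ, 0 ≤ c ∧ c ≤ 1 ∧ Ioo 0 c ⊆ {u | u ∈ Ioo (0:ℝ) 1 ∧ lam < f u}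
      ∧ {u | u ∈ Ioo (0:ℝ) 1 ∧ lam < f u} ⊆ Ioc 0 c := by
  set E := {u | u ∈ Ioo (0:ℝ) 1 ∧ lam < f u} with hE
  rcases eq_empty_or_nonempty E with h | h
  · exact ⟨0, le_refl 0, zero_le_one, by simp [h], by simp [h]⟩
  · have hbdd : BddAbove E := ⟨1, fun u hu => hu.1.2.le⟩
    set c := sSup E with hc
    have hc1 : c ≤ 1 := csSup_le h (fun u hu => hu.1.2.le)
    have hc0 : 0 ≤ c := by
      obtain ⟨u, hu⟩ := h
      exact le_trans hu.1.1.le (le_csSup hbdd hu)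
    refine ⟨c, hc0, hc1, ?_, ?_⟩
    · intro u hu
      obtain ⟨v, hv, huv⟩ := exists_lt_of_lt_csSup h hu.2
      refine ⟨⟨hu.1, lt_trans huv hv.1.2⟩, lt_of_lt_of_le hv.2 ?_⟩
      exact hanti (mem_Ioi.2 hu.1) (mem_Ioi.2 hv.1.1) huv.le
    · intro u hu
      exact ⟨hu.1.1, le_csSup hbdd hu⟩

noncomputable def bnd (a t : ℝ) : ℝ :=
  if t ≤ a then psi t ^ 2 else psi a ^ 2 + a * (psi t ^ 2 / t)

noncomputable def Jpsi (a : ℝ) : ℝ≥0∞ := ∫⁻ u in Ioo (0:ℝ) a, ENNReal.ofReal (psi u ^ 2 / u)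

lemma psi_zero : psi 0 = 0 := by simp [psi]

lemma psi_inv_e : psi (Real.exp 1)⁻¹ = 1 / 2 := by
  have h : (0:ℝ) < (Real.exp 1)⁻¹ := inv_pos.2 (Real.exp_pos 1)
  rw [psi_eq h, Real.log_inv, Real.log_exp]
  norm_num

lemma inv_e_lt_one : (Real.exp 1)⁻¹ < 1 := by
  rw [inv_lt_one_iff₀]
  right
  have := Real.exp_one_gt_d9
  linarith

lemma Jpsi_ge {a : ℝ} (ha : 0 < a) (ha1 : a ≤ 1) : ENNReal.ofReal (psi a) ≤ Jpsi a := by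
  have hev : ∀ᶠ ε in nhdsWithin (0:ℝ) (Ioi 0),
      ENNReal.ofReal (psi a - psi ε) ≤ Jpsi a := by
    filter_upwards [Ioo_mem_nhdsGT_of_mem (by constructor <;> simp [ha] : (0:ℝ) ∈ Ico 0 a)]
    intro ε hε
    rw [← ftc_psi hε.1 hε.2.le ha1]
    exact lintegral_mono_set (fun u hu => ⟨lt_trans hε.1 hu.1, hu.2⟩)
  have htend : Filter.Tendsto (fun ε => ENNReal.ofReal (psi a - psi ε))
      (nhdsWithin (0:ℝ) (Ioi 0)) (nhds (ENNReal.ofReal (psi a))) := by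
    have h1 : Filter.Tendsto (fun ε : ℝ => 1 - Real.log ε)
        (nhdsWithin (0:ℝ) (Ioi 0)) Filter.atTop := by
      apply Filter.tendsto_atTop_add_const_left
      exact Filter.tendsto_neg_atBot_atTop.comp Real.tendsto_log_nhdsGT_zero
    have h2 : Filter.Tendsto (fun ε : ℝ => (1 - Real.log ε)⁻¹)
        (nhdsWithin (0:ℝ) (Ioi 0)) (nhds 0) :=
      tendsto_inv_atTop_zero.comp h1
    have h3 : Filter.Tendsto psi (nhdsWithin (0:ℝ) (Ioi 0)) (nhds 0) := by
      apply h2.congr'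
      filter_upwards [self_mem_nhdsWithin] with ε hε
      exact (psi_eq hε).symm
    have h4 : Filter.Tendsto (fun ε => psi a - psi ε)
        (nhdsWithin (0:ℝ) (Ioi 0)) (nhds (psi a)) := by
      simpa using (tendsto_const_nhds.sub h3)
    exact (ENNReal.continuous_ofReal.tendsto _).comp h4
  exact le_of_tendsto htend hev

lemma pw_low {a t : ℝ} (ha : 0 < a) (hat : a < t) (hte : t ≤ (Real.exp 1)⁻¹) :
    a * (psi t ^ 2 / t ^ 2) ≤ psi a ^ 2 / t := by
  have ht0 : 0 < t := lt_trans ha hat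
  have ht1 : t ≤ 1 := le_trans hte inv_e_lt_one.le
  have ha1 : a ≤ 1 := le_trans hat.le ht1
  rw [psi_eq ha, psi_eq ht0]
  set La := 1 - Real.log a with hLa
  set Lt := 1 - Real.log t with hLt
  have hLa0 : 0 < La := one_sub_log_pos ha ha1
  have hLt0 : 0 < Lt := one_sub_log_pos ht0 ht1
  have key : a * La ^ 2 ≤ t * Lt ^ 2 := h_mono_low ha hat.le hte
  rw [mul_div_assoc', div_le_div_iff₀ (by positivity) ht0]
  have main : a * Lt⁻¹ ^ 2 * t * (La ^ 2 * Lt ^ 2) ≤ La⁻¹ ^ 2 * t ^ 2 * (La ^ 2 * Lt ^ 2) := by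
    have e1 : a * Lt⁻¹ ^ 2 * t * (La ^ 2 * Lt ^ 2) = (a * La ^ 2) * t := by
      field_simp
    have e2 : La⁻¹ ^ 2 * t ^ 2 * (La ^ 2 * Lt ^ 2) = (t * Lt ^ 2) * t := by
      field_simp
    rw [e1, e2]
    exact mul_le_mul_of_nonneg_right key ht0.le
  exact le_of_mul_le_mul_right main (by positivity)


lemma exp_one_lt_four : Real.exp 1 < 4 := by
  have := Real.exp_one_lt_d9
  norm_num at this
  linarith

lemma second_piece {a : ℝ} (hapos : 0 < a) (halt : a < 1) :
    ∫⁻ t in Ioo a 1, ENNReal.ofReal (bnd a t / t)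
      ≤ ENNReal.ofReal (psi a - psi a ^ 2) + ENNReal.ofReal (psi a + psi a ^ 2) := by
  set p := psi a with hp
  have hL0 : 0 < 1 - Real.log a := one_sub_log_pos hapos halt.le
  have hpinv : p = (1 - Real.log a)⁻¹ := psi_eq hapos
  have hppos : 0 < p := psi_pos hapos halt.le
  have hpL : p * (1 - Real.log a) = 1 := by rw [hpinv]; field_simp
  -- pointwise split of the integrand
  have hpoint : ∫⁻ t in Ioo a 1, ENNReal.ofReal (bnd a t / t)
      ≤ ∫⁻ t in Ioo a 1,
          (ENNReal.ofReal (p ^ 2 / t) + ENNReal.ofReal (a * (psi t ^ 2 / t ^ 2))) := by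
    apply setLIntegral_mono_ae' measurableSet_Ioo
    apply ae_of_all
    intro t ht
    have ht0 : 0 < t := lt_trans hapos ht.1
    have hbnd : bnd a t / t = p ^ 2 / t + a * (psi t ^ 2 / t ^ 2) := by
      rw [bnd, if_neg (not_le.2 ht.1)]
      field_simp
      ring
    rw [hbnd]
    exact ENNReal.ofReal_add_le
  have hmeas1 : Measurable (fun t : ℝ => ENNReal.ofReal (p ^ 2 / t)) :=
    (measurable_const.div measurable_id).ennreal_ofReal
  rw [lintegral_add_left hmeas1] at hpoint
  -- first summand
  have hA1 : ∫⁻ t in Ioo a 1, ENNReal.ofReal (p ^ 2 / t) = ENNReal.ofReal (p - p ^ 2) := by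
    rw [ftc_log hapos halt.le (sq_nonneg p)]
    congr 1
    rw [Real.log_one, hpinv]
    field_simp
    ring
  -- second summand
  have hA2 : ∫⁻ t in Ioo a 1, ENNReal.ofReal (a * (psi t ^ 2 / t ^ 2))
      ≤ ENNReal.ofReal (p + p ^ 2) := by
    have hpsi_sq_le : ∀ t : ℝ, 0 < t → t ≤ 1 → psi t ^ 2 ≤ 1 := by
      intro t ht0 ht1
      have h1 := psi_le_one ht0 ht1
      have h2 := psi_nonneg ht0.le ht1
      nlinarith
    rcases le_or_gt (Real.exp 1)⁻¹ a with hae | hae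
    · -- a ≥ 1/e
      have step : ∫⁻ t in Ioo a 1, ENNReal.ofReal (a * (psi t ^ 2 / t ^ 2))
          ≤ ∫⁻ t in Ioo a 1, ENNReal.ofReal (a / t ^ 2) := by
        apply setLIntegral_mono_ae' measurableSet_Ioo
        apply ae_of_all
        intro t ht
        apply ENNReal.ofReal_le_ofReal
        have ht0 : 0 < t := lt_trans hapos ht.1
        have h1 := hpsi_sq_le t ht0 ht.2.le
        rw [mul_div_assoc', div_le_div_iff₀ (by positivity) (by positivity : (0:ℝ) < t ^ 2)]
        nlinarith [mul_le_mul_of_nonneg_right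
          (mul_le_mul_of_nonneg_left h1 hapos.le) (sq_nonneg t)]
      rw [ftc_invsq hapos halt.le hapos.le] at step
      have he1 : a / a - a / 1 = 1 - a := by field_simp
      rw [he1] at step
      apply le_trans step (ENNReal.ofReal_le_ofReal ?_)
      have hpe : (1:ℝ)/2 ≤ p := by
        rw [hp, ← psi_inv_e]
        exact psi_mono (inv_pos.2 (Real.exp_pos 1)) hae halt.le
      have h4 := exp_one_lt_four
      have hE0 := Real.exp_pos 1
      have hEinv : (Real.exp 1)⁻¹ * Real.exp 1 = 1 := inv_mul_cancel₀ (ne_of_gt hE0)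
      nlinarith [hpe, hae, h4, hE0, hEinv, inv_pos.2 hE0]
    · -- a < 1/e
      set c := (Real.exp 1)⁻¹ with hc
      have hc0 : 0 < c := inv_pos.2 (Real.exp_pos 1)
      have hc1 : c < 1 := inv_e_lt_one
      have hIoc : ∀ (x y : ℝ) (g : ℝ → ℝ≥0∞),
          ∫⁻ t in Ioc x y, g t = ∫⁻ t in Ioo x y, g t := fun x y g => by
        rw [Measure.restrict_congr_set Ioo_ae_eq_Ioc]
      have hsub : Ioo a 1 ⊆ Ioc a c ∪ Ioc c 1 := by
        intro t ht
        rcases le_or_gt t c with h | h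
        · exact Or.inl ⟨ht.1, h⟩
        · exact Or.inr ⟨h, ht.2.le⟩
      have step1 : ∫⁻ t in Ioc a c, ENNReal.ofReal (a * (psi t ^ 2 / t ^ 2))
          ≤ ENNReal.ofReal (p - 2 * p ^ 2) := by
        rw [hIoc]
        have hmono : ∫⁻ t in Ioo a c, ENNReal.ofReal (a * (psi t ^ 2 / t ^ 2))
            ≤ ∫⁻ t in Ioo a c, ENNReal.ofReal (p ^ 2 / t) := by
          apply setLIntegral_mono_ae' measurableSet_Ioo
          apply ae_of_all
          intro t ht
          exact ENNReal.ofReal_le_ofReal (pw_low hapos ht.1 ht.2.le)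
        rw [ftc_log hapos hae.le (sq_nonneg p)] at hmono
        apply le_trans hmono (le_of_eq ?_)
        congr 1
        rw [hc, Real.log_inv, Real.log_exp, hpinv]
        field_simp
        ring
      have step2 : ∫⁻ t in Ioc c 1, ENNReal.ofReal (a * (psi t ^ 2 / t ^ 2))
          ≤ ENNReal.ofReal (a * Real.exp 1 - a) := by
        rw [hIoc]
        have hmono : ∫⁻ t in Ioo c 1, ENNReal.ofReal (a * (psi t ^ 2 / t ^ 2))
            ≤ ∫⁻ t in Ioo c 1, ENNReal.ofReal (a / t ^ 2) := by
          apply setLIntegral_mono_ae' measurableSet_Ioo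
          apply ae_of_all
          intro t ht
          apply ENNReal.ofReal_le_ofReal
          have ht0 : 0 < t := lt_trans hc0 ht.1
          have h1 := hpsi_sq_le t ht0 ht.2.le
          rw [mul_div_assoc', div_le_div_iff₀ (by positivity) (by positivity : (0:ℝ) < t ^ 2)]
          nlinarith [mul_le_mul_of_nonneg_right
            (mul_le_mul_of_nonneg_left h1 hapos.le) (sq_nonneg t)]
        rw [ftc_invsq hc0 hc1.le hapos.le] at hmono
        apply le_trans hmono (le_of_eq ?_)
        congr 1
        rw [hc]
        field_simp
      have hple2 : p ≤ 1/2 := by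
        rw [hp, ← psi_inv_e]
        exact psi_mono hapos hae.le hc1.le
      have hE0 := Real.exp_pos 1
      have hE2 : (2:ℝ) ≤ Real.exp 1 := by
        have := Real.add_one_le_exp (1:ℝ); linarith
      have h4 := exp_one_lt_four
      have hcombined : (p - 2 * p ^ 2) + (a * Real.exp 1 - a) ≤ p + p ^ 2 := by
        -- a * (exp 1 - 1) ≤ 3 p ^ 2
        have hlea := h_le hapos halt.le
        have hLp : (1 - Real.log a) * p = 1 := by rw [mul_comm]; exact hpL
        have e3 : a * (1 - Real.log a) ^ 2 * p ^ 2 = a := by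
          calc a * (1 - Real.log a) ^ 2 * p ^ 2 = a * ((1 - Real.log a) * p) ^ 2 := by ring
            _ = a := by rw [hLp]; ring
        have e4 : a * (1 - Real.log a) ^ 2 * p ^ 2 ≤ (4 / Real.exp 1) * p ^ 2 :=
          mul_le_mul_of_nonneg_right hlea (sq_nonneg p)
        rw [e3] at e4
        -- a ≤ (4/E) p^2 ; want a (E-1) ≤ 3 p^2
        have hEinv : Real.exp 1 * (4 / Real.exp 1) = 4 := by field_simp
        nlinarith [e4, sq_nonneg p, mul_le_mul_of_nonneg_right e4 (le_of_lt hE0),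
          mul_le_mul_of_nonneg_left e4 (le_of_lt hE0)]
      calc ∫⁻ t in Ioo a 1, ENNReal.ofReal (a * (psi t ^ 2 / t ^ 2))
          ≤ ∫⁻ t in Ioc a c ∪ Ioc c 1, ENNReal.ofReal (a * (psi t ^ 2 / t ^ 2)) :=
            lintegral_mono_set hsub
        _ ≤ (∫⁻ t in Ioc a c, ENNReal.ofReal (a * (psi t ^ 2 / t ^ 2)))
            + ∫⁻ t in Ioc c 1, ENNReal.ofReal (a * (psi t ^ 2 / t ^ 2)) :=
            lintegral_union_le _ _ _
        _ ≤ ENNReal.ofReal (p - 2 * p ^ 2) + ENNReal.ofReal (a * Real.exp 1 - a) :=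
            add_le_add step1 step2
        _ = ENNReal.ofReal ((p - 2 * p ^ 2) + (a * Real.exp 1 - a)) := by
            rw [ENNReal.ofReal_add (by nlinarith) (by nlinarith)]
        _ ≤ ENNReal.ofReal (p + p ^ 2) := ENNReal.ofReal_le_ofReal hcombined
  calc ∫⁻ t in Ioo a 1, ENNReal.ofReal (bnd a t / t)
      ≤ (∫⁻ t in Ioo a 1, ENNReal.ofReal (p ^ 2 / t))
        + ∫⁻ t in Ioo a 1, ENNReal.ofReal (a * (psi t ^ 2 / t ^ 2)) := hpoint
    _ ≤ ENNReal.ofReal (p - p ^ 2) + ENNReal.ofReal (p + p ^ 2) := by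
        rw [hA1]
        exact add_le_add_right hA2 _


lemma bnd_integral_le {a : ℝ} (ha0 : 0 ≤ a) (ha1 : a ≤ 1) :
    ∫⁻ t in Ioo (0:ℝ) 1, ENNReal.ofReal (bnd a t / t) ≤ 3 * Jpsi a := by
  rcases eq_or_lt_of_le ha0 with h0 | hapos
  · have hz : ∀ t ∈ Ioo (0:ℝ) 1, ENNReal.ofReal (bnd a t / t) = 0 := by
      intro t ht
      have hb : bnd a t = 0 := by
        rw [bnd, if_neg (by rw [← h0]; exact not_le.2 ht.1), ← h0, psi_zero]
        ring
      simp [hb]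
    rw [setLIntegral_congr_fun measurableSet_Ioo hz]
    simp
  rcases eq_or_lt_of_le ha1 with h1 | halt
  · have hz : ∀ t ∈ Ioo (0:ℝ) 1, ENNReal.ofReal (bnd a t / t)
        = ENNReal.ofReal (psi t ^ 2 / t) := by
      intro t ht
      rw [bnd, if_pos (h1 ▸ ht.2.le)]
    rw [setLIntegral_congr_fun measurableSet_Ioo hz]
    have : Jpsi a = ∫⁻ t in Ioo (0:ℝ) 1, ENNReal.ofReal (psi t ^ 2 / t) := by
      rw [Jpsi, h1]
    rw [← this]
    exact le_mul_of_one_le_left (by positivity) (by norm_num)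
  -- main case 0 < a < 1
  set p := psi a with hp
  have hppos : 0 < p := psi_pos hapos halt.le
  have hple : p ≤ 1 := psi_le_one hapos halt.le
  have hL0 : 0 < 1 - Real.log a := one_sub_log_pos hapos halt.le
  have hpinv : p = (1 - Real.log a)⁻¹ := psi_eq hapos
  -- split the domain
  have hsplit : Ioo (0:ℝ) 1 = Ioc 0 a ∪ Ioo a 1 := by
    ext t
    simp only [mem_Ioo, mem_union, mem_Ioc]
    constructor
    · rintro ⟨h1, h2⟩
      rcases le_or_gt t a with h | h
      · exact Or.inl ⟨h1, h⟩
      · exact Or.inr ⟨h, h2⟩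
    · rintro (⟨h1, h2⟩ | ⟨h1, h2⟩)
      · exact ⟨h1, lt_of_le_of_lt h2 halt⟩
      · exact ⟨lt_trans hapos h1, h2⟩
  have hdisj : Disjoint (Ioc (0:ℝ) a) (Ioo a 1) :=
    disjoint_left.2 (fun t ht ht' => absurd ht.2 (not_le.2 ht'.1))
  rw [hsplit, lintegral_union measurableSet_Ioo hdisj]
  -- first piece
  have hfirst : ∫⁻ t in Ioc (0:ℝ) a, ENNReal.ofReal (bnd a t / t) = Jpsi a := by
    rw [← Measure.restrict_congr_set Ioo_ae_eq_Ioc, Jpsi]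
    apply setLIntegral_congr_fun measurableSet_Ioo
    intro t ht
    dsimp only
    rw [bnd, if_pos ht.2.le]
  -- second piece
  have hsecond : ∫⁻ t in Ioo a 1, ENNReal.ofReal (bnd a t / t)
      ≤ ENNReal.ofReal (p - p ^ 2) + ENNReal.ofReal (p + p ^ 2) :=
    second_piece hapos halt
  rw [hfirst]
  have hJp : ENNReal.ofReal p ≤ Jpsi a := Jpsi_ge hapos halt.le
  calc Jpsi a + ∫⁻ t in Ioo a 1, ENNReal.ofReal (bnd a t / t)
      ≤ Jpsi a + (ENNReal.ofReal (p - p ^ 2) + ENNReal.ofReal (p + p ^ 2)) :=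
        add_le_add_right hsecond _
    _ = Jpsi a + ENNReal.ofReal (2 * p) := by
        rw [← ENNReal.ofReal_add (by nlinarith) (by nlinarith)]
        ring_nf
    _ ≤ Jpsi a + (ENNReal.ofReal p + ENNReal.ofReal p) := by
        rw [two_mul, ENNReal.ofReal_add hppos.le hppos.le]
    _ ≤ Jpsi a + (Jpsi a + Jpsi a) := add_le_add_right (add_le_add hJp hJp) _
    _ = 3 * Jpsi a := by ring

lemma phi_anti_high {s t : ℝ} (hs : (Real.exp 1)⁻¹ < s) (hst : s ≤ t) (ht1 : t ≤ 1) :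
    psi s ^ 2 / s ≤ psi t ^ 2 / t := by
  have he : (0:ℝ) < (Real.exp 1)⁻¹ := inv_pos.2 (Real.exp_pos 1)
  have hs0 : 0 < s := lt_trans he hs
  have ht0 : 0 < t := lt_of_lt_of_le hs0 hst
  rw [psi_eq hs0, psi_eq ht0]
  set Ls := 1 - Real.log s with hLs
  set Lt := 1 - Real.log t with hLt
  have hLs0 : 0 < Ls := one_sub_log_pos hs0 (le_trans hst ht1)
  have hLt0 : 0 < Lt := one_sub_log_pos ht0 ht1
  have key : t * Lt ^ 2 ≤ s * Ls ^ 2 := h_anti_high hs.le hst ht1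
  rw [div_le_div_iff₀ hs0 ht0]
  have main : Ls⁻¹ ^ 2 * t * (Ls ^ 2 * Lt ^ 2) ≤ Lt⁻¹ ^ 2 * s * (Ls ^ 2 * Lt ^ 2) := by
    have e1 : Ls⁻¹ ^ 2 * t * (Ls ^ 2 * Lt ^ 2) = (t * Lt ^ 2) := by
      field_simp
    have e2 : Lt⁻¹ ^ 2 * s * (Ls ^ 2 * Lt ^ 2) = (s * Ls ^ 2) := by
      field_simp
    rw [e1, e2]
    exact key
  exact le_of_mul_le_mul_right main (by positivity)

lemma bnd_nonneg {c t : ℝ} (hc0 : 0 ≤ c) (hc1 : c ≤ 1) (ht : 0 < t) (ht1 : t ≤ 1) :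
    0 ≤ bnd c t := by
  rw [bnd]
  split
  · positivity
  · have h1 := psi_nonneg hc0 hc1
    have h2 := psi_nonneg ht.le ht1
    positivity

lemma pointwise_bnd {c s t : ℝ} (hc0 : 0 ≤ c) (hc1 : c ≤ 1) (hs : 0 < s) (hst : s < t)
    (ht1 : t ≤ 1) : psi s ^ 2 / s * min c s ≤ bnd c t := by
  have hs1 : s ≤ 1 := le_trans hst.le ht1
  have ht0 : 0 < t := lt_trans hs hst
  have hpsis := psi_nonneg hs.le hs1
  have hpsit := psi_nonneg ht0.le ht1
  have hpsic := psi_nonneg hc0 hc1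
  rcases le_or_gt s c with hsc | hcs
  · -- s ≤ c : min = s, LHS = psi s ^ 2
    rw [min_eq_right hsc]
    have hLHS : psi s ^ 2 / s * s = psi s ^ 2 := by field_simp
    rw [hLHS, bnd]
    split
    · -- t ≤ c : psi s^2 ≤ psi t^2
      have := psi_mono hs hst.le ht1
      nlinarith
    · -- psi s^2 ≤ psi c^2 + nonneg
      have h1 : psi s ≤ psi c := psi_mono hs hsc hc1
      nlinarith [div_nonneg (mul_nonneg hc0 (sq_nonneg (psi t))) ht0.le,
        mul_nonneg hc0 (div_nonneg (sq_nonneg (psi t)) ht0.le)]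
  · -- c < s : min = c
    rw [min_eq_left hcs.le]
    have hnt : ¬ t ≤ c := not_le.2 (lt_trans hcs hst)
    rw [bnd, if_neg hnt]
    rcases le_or_gt s (Real.exp 1)⁻¹ with hse | hse
    · -- s ≤ 1/e : use pw_low
      rcases eq_or_lt_of_le hc0 with hceq | hcpos
      · rw [← hceq]
        simp [psi_zero]
      · have key := pw_low hcpos hcs hse
        -- c * (psi s^2/s^2) ≤ psi c^2 / s ; multiply by s
        have key2 : c * (psi s ^ 2 / s ^ 2) * s ≤ psi c ^ 2 / s * s :=
          mul_le_mul_of_nonneg_right key hs.le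
        have e1 : c * (psi s ^ 2 / s ^ 2) * s = psi s ^ 2 / s * c := by
          field_simp
        have e2 : psi c ^ 2 / s * s = psi c ^ 2 := by field_simp
        rw [e1, e2] at key2
        nlinarith [mul_nonneg hc0 (div_nonneg (sq_nonneg (psi t)) ht0.le)]
    · -- 1/e < s : psi s^2/s ≤ psi t^2/t
      have key := phi_anti_high hse hst.le ht1
      have : psi s ^ 2 / s * c ≤ psi t ^ 2 / t * c :=
        mul_le_mul_of_nonneg_right key hc0
      nlinarith [sq_nonneg (psi c)]

lemma measurable_psi : Measurable psi :=
  measurable_const.div (Real.measurable_log.comp (measurable_const.div measurable_id))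

lemma measurable_bnd : Measurable (fun p : ℝ × ℝ => bnd p.1 p.2) := by
  unfold bnd
  apply Measurable.ite (measurableSet_le measurable_snd measurable_fst)
  · exact ((measurable_psi.comp measurable_snd).pow_const 2)
  · exact (((measurable_psi.comp measurable_fst).pow_const 2)).add
      (measurable_fst.mul (((measurable_psi.comp measurable_snd).pow_const 2).div
        measurable_snd))

/-- For `w ∈ Λ_ψ(0,1)`:
`∫_0^1 [sup_{0<s<t} ψ(s)² (Cμ(w))(s)] dt/t ≤ 3 ‖w‖_{Λ_ψ}`, where
`‖w‖_{Λ_ψ} = ∫_0^1 μ(s,w) dψ(s) = ∫_0^1 μ(s,w) ψ(s)²/s ds`. -/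
theorem stmt13 (w : ℝ → ℝ) (hw : Measurable w)
    (hmem : IntegrableOn (fun s => mu w s * (psi s ^ 2 / s)) (Set.Ioo 0 1)) :
    (∫⁻ t in Set.Ioo (0:ℝ) 1,
        ENNReal.ofReal ((sSup {r : ℝ | ∃ s ∈ Set.Ioo (0:ℝ) t, r = psi s ^ 2 * Ces (mu w) s}) / t))
      ≤ 3 * ∫⁻ s in Set.Ioo (0:ℝ) 1, ENNReal.ofReal (mu w s * (psi s ^ 2 / s)) := by

  set f := mu w with hf
  have hf0 : ∀ u, 0 ≤ f u := mu_nonneg w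
  have hanti : AntitoneOn f (Ioi 0) := mu_antitoneOn w hw
  have haem : AEMeasurable f (volume.restrict (Ioo 0 1)) :=
    aemeasurable_restrict_of_antitoneOn measurableSet_Ioo (hanti.mono Ioo_subset_Ioi_self)
  have hE2 : (0:ℝ) < Real.exp 1 := Real.exp_pos 1
  -- integrability of f on (0,1)
  have hint : IntegrableOn f (Ioo 0 1) := by
    apply Integrable.mono' (hmem.const_mul (4 / Real.exp 1)) haem.aestronglyMeasurable
    rw [ae_restrict_iff' measurableSet_Ioo]
    apply ae_of_all
    intro u hu
    have hLu := one_sub_log_pos hu.1 hu.2.le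
    have hkey := h_le hu.1 hu.2.le
    have hx : (0:ℝ) < u * (1 - Real.log u) ^ 2 := mul_pos hu.1 (pow_pos hLu 2)
    have hpsi : psi u ^ 2 / u = (u * (1 - Real.log u) ^ 2)⁻¹ := by
      rw [psi_eq hu.1, inv_pow, div_eq_mul_inv, ← mul_inv, mul_comm]
    have hge : 1 ≤ 4 / Real.exp 1 * (psi u ^ 2 / u) := by
      rw [hpsi, mul_comm, inv_mul_eq_div, le_div_iff₀ hx, one_mul]
      exact hkey
    rw [Real.norm_eq_abs, abs_of_nonneg (hf0 u)]
    calc f u = f u * 1 := by ring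
      _ ≤ f u * (4 / Real.exp 1 * (psi u ^ 2 / u)) :=
        mul_le_mul_of_nonneg_left hge (hf0 u)
      _ = 4 / Real.exp 1 * (f u * (psi u ^ 2 / u)) := by ring
  -- the level length function
  set lamA : ℝ → ℝ := fun lam => (volume {u | u ∈ Ioo (0:ℝ) 1 ∧ lam < f u}).toReal with hlamA
  have hkeyA : ∀ lam : ℝ, 0 ≤ lamA lam ∧ lamA lam ≤ 1
      ∧ Ioo 0 (lamA lam) ⊆ {u | u ∈ Ioo (0:ℝ) 1 ∧ lam < f u}
      ∧ {u | u ∈ Ioo (0:ℝ) 1 ∧ lam < f u} ⊆ Ioc 0 (lamA lam) := by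
    intro lam
    obtain ⟨c, hc0, hc1, hsub1, hsub2⟩ := level_sandwich hanti lam
    have hvol : volume {u | u ∈ Ioo (0:ℝ) 1 ∧ lam < f u} = ENNReal.ofReal c :=
      meas_squeeze hc0 hsub1 hsub2
    have hA : lamA lam = c := by rw [hlamA]; simp only; rw [hvol, ENNReal.toReal_ofReal hc0]
    rw [hA]
    exact ⟨hc0, hc1, hsub1, hsub2⟩
  have hlamA_meas : Measurable lamA := by
    have : Antitone lamA := by
      intro l1 l2 h12
      apply ENNReal.toReal_mono
      · apply ne_of_lt
        calc volume {u | u ∈ Ioo (0:ℝ) 1 ∧ l1 < f u} ≤ volume (Ioo (0:ℝ) 1) :=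
          measure_mono (fun u hu => hu.1)
          _ < ⊤ := by rw [Real.volume_Ioo]; exact ENNReal.ofReal_lt_top
      · exact measure_mono (fun u hu => ⟨hu.1, lt_of_le_of_lt h12 hu.2⟩)
    exact this.measurable
  -- layer cake for the Cesaro integrals
  have hCes : ∀ s : ℝ, 0 < s → s < 1 →
      ENNReal.ofReal (∫ u in Ioc (0:ℝ) s, f u)
        = ∫⁻ lam in Ioi (0:ℝ), ENNReal.ofReal (min (lamA lam) s) := by
    intro s hs0 hs1
    have hsub : Ioc (0:ℝ) s ⊆ Ioo 0 1 := fun u hu => ⟨hu.1, lt_of_le_of_lt hu.2 hs1⟩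
    have hints : IntegrableOn f (Ioc 0 s) := hint.mono_set hsub
    rw [ofReal_integral_eq_lintegral_ofReal hints (ae_of_all _ hf0)]
    rw [lintegral_eq_lintegral_meas_lt _ (ae_of_all _ hf0)
      (haem.mono_measure (Measure.restrict_mono hsub le_rfl))]
    apply setLIntegral_congr_fun measurableSet_Ioi
    intro lam _
    dsimp only
    rw [Measure.restrict_apply' measurableSet_Ioc]
    obtain ⟨hc0, hc1, hsub1, hsub2⟩ := hkeyA lam
    apply meas_squeeze (le_min hc0 hs0.le)
    · intro u hu
      have hu1 : u ∈ Ioo 0 (lamA lam) := ⟨hu.1, lt_of_lt_of_le hu.2 (min_le_left _ _)⟩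
      exact ⟨(hsub1 hu1).2, ⟨hu.1, le_of_lt (lt_of_lt_of_le hu.2 (min_le_right _ _))⟩⟩
    · rintro u ⟨hu1, hu2⟩
      have huE : u ∈ {u | u ∈ Ioo (0:ℝ) 1 ∧ lam < f u} := ⟨hsub hu2, hu1⟩
      exact ⟨hu2.1, le_min (hsub2 huE).2 hu2.2⟩
  -- bound each element of the sup set
  have helem : ∀ t ∈ Ioo (0:ℝ) 1, ∀ s ∈ Ioo (0:ℝ) t,
      ENNReal.ofReal (psi s ^ 2 * Ces f s)
        ≤ ∫⁻ lam in Ioi (0:ℝ), ENNReal.ofReal (bnd (lamA lam) t) := by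
    intro t ht s hs
    have hs1 : s < 1 := lt_trans hs.2 ht.2
    have hpsis : 0 ≤ psi s ^ 2 / s := div_nonneg (sq_nonneg _) hs.1.le
    have hrw : psi s ^ 2 * Ces f s = psi s ^ 2 / s * ∫ u in Ioc (0:ℝ) s, f u := by
      rw [Ces]
      ring
    rw [hrw, ENNReal.ofReal_mul hpsis, hCes s hs.1 hs1,
      ← lintegral_const_mul' _ _ ENNReal.ofReal_ne_top]
    apply setLIntegral_mono_ae' measurableSet_Ioi
    apply ae_of_all
    intro lam _
    obtain ⟨hc0, hc1, _, _⟩ := hkeyA lam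
    rw [← ENNReal.ofReal_mul hpsis]
    exact ENNReal.ofReal_le_ofReal (pointwise_bnd hc0 hc1 hs.1 hs.2 ht.2.le)
  -- bound the sup
  have hsup : ∀ t ∈ Ioo (0:ℝ) 1,
      ENNReal.ofReal ((sSup {r : ℝ | ∃ s ∈ Set.Ioo (0:ℝ) t, r = psi s ^ 2 * Ces f s}))
        ≤ ∫⁻ lam in Ioi (0:ℝ), ENNReal.ofReal (bnd (lamA lam) t) := by
    intro t ht
    set Phi := ∫⁻ lam in Ioi (0:ℝ), ENNReal.ofReal (bnd (lamA lam) t) with hPhi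
    by_cases hPhiTop : Phi = ⊤
    · rw [hPhiTop]; exact le_top
    have hub : ∀ r ∈ {r : ℝ | ∃ s ∈ Set.Ioo (0:ℝ) t, r = psi s ^ 2 * Ces f s},
        r ≤ Phi.toReal := by
      rintro r ⟨s, hsmem, rfl⟩
      have h1 := helem t ht s hsmem
      have hces : 0 ≤ Ces f s := by
        rw [Ces]
        exact div_nonneg (setIntegral_nonneg measurableSet_Ioc (fun u _ => hf0 u)) hsmem.1.le
      have hr0 : 0 ≤ psi s ^ 2 * Ces f s := mul_nonneg (sq_nonneg _) hces
      calc psi s ^ 2 * Ces f s = (ENNReal.ofReal (psi s ^ 2 * Ces f s)).toReal := by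
            rw [ENNReal.toReal_ofReal hr0]
        _ ≤ Phi.toReal := ENNReal.toReal_mono hPhiTop h1
    have hne : {r : ℝ | ∃ s ∈ Set.Ioo (0:ℝ) t, r = psi s ^ 2 * Ces f s}.Nonempty :=
      ⟨psi (t/2) ^ 2 * Ces f (t/2), t/2, ⟨by linarith [ht.1], by linarith [ht.1]⟩, rfl⟩
    have := csSup_le hne hub
    calc ENNReal.ofReal (sSup {r : ℝ | ∃ s ∈ Set.Ioo (0:ℝ) t, r = psi s ^ 2 * Ces f s})
        ≤ ENNReal.ofReal Phi.toReal := ENNReal.ofReal_le_ofReal this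
      _ = Phi := ENNReal.ofReal_toReal hPhiTop
  -- RHS via layer cake with density
  set dens : ℝ → ℝ≥0∞ := fun u => ENNReal.ofReal (psi u ^ 2 / u) with hdens
  have hdens_meas : Measurable dens :=
    ((measurable_psi.pow_const 2).div measurable_id).ennreal_ofReal
  set muPsi := (volume.restrict (Ioo (0:ℝ) 1)).withDensity dens with hmupsi
  have hRHS1 : ∫⁻ s in Set.Ioo (0:ℝ) 1, ENNReal.ofReal (f s * (psi s ^ 2 / s))
      = ∫⁻ s, ENNReal.ofReal (f s) ∂muPsi := by
    rw [hmupsi, lintegral_withDensity_eq_lintegral_mul_non_measurable _ hdens_meas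
      (ae_of_all _ (fun u => ENNReal.ofReal_lt_top))]
    apply lintegral_congr
    intro u
    simp only [Pi.mul_apply, hdens]
    rw [mul_comm (ENNReal.ofReal (psi u ^ 2 / u))]
    exact ENNReal.ofReal_mul (hf0 u)
  have hfaem2 : AEMeasurable f muPsi := haem.mono_ac (withDensity_absolutelyContinuous _ _)
  have hRHS2 : ∫⁻ s, ENNReal.ofReal (f s) ∂muPsi
      = ∫⁻ lam in Ioi (0:ℝ), muPsi {u | lam < f u} :=
    lintegral_eq_lintegral_meas_lt muPsi (ae_of_all _ hf0) hfaem2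
  have hJle : ∀ lam : ℝ, Jpsi (lamA lam) ≤ muPsi {u | lam < f u} := by
    intro lam
    obtain ⟨hc0, hc1, hsub1, _⟩ := hkeyA lam
    have h1 : muPsi (Ioo 0 (lamA lam)) = Jpsi (lamA lam) := by
      rw [hmupsi, withDensity_apply _ measurableSet_Ioo,
        Measure.restrict_restrict measurableSet_Ioo,
        inter_eq_self_of_subset_left (Ioo_subset_Ioo_right hc1)]
      rfl
    rw [← h1]
    exact measure_mono (fun u hu => (hsub1 hu).2)
  -- measurability for Tonelli
  have hswap_meas : AEMeasurable (Function.uncurry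
      (fun (t lam : ℝ) => ENNReal.ofReal (bnd (lamA lam) t) * ENNReal.ofReal t⁻¹))
      ((volume.restrict (Ioo (0:ℝ) 1)).prod (volume.restrict (Ioi (0:ℝ)))) := by
    apply Measurable.aemeasurable
    apply Measurable.mul (f := fun p : ℝ × ℝ => ENNReal.ofReal (bnd (lamA p.2) p.1))
      (g := fun p : ℝ × ℝ => ENNReal.ofReal p.1⁻¹)
    · exact (measurable_bnd.comp
        ((hlamA_meas.comp measurable_snd).prodMk measurable_fst)).ennreal_ofReal
    · exact (measurable_fst.inv).ennreal_ofReal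
  -- final chain
  calc ∫⁻ t in Set.Ioo (0:ℝ) 1,
        ENNReal.ofReal ((sSup {r : ℝ | ∃ s ∈ Set.Ioo (0:ℝ) t, r = psi s ^ 2 * Ces f s}) / t)
      ≤ ∫⁻ t in Ioo (0:ℝ) 1,
          (∫⁻ lam in Ioi (0:ℝ), ENNReal.ofReal (bnd (lamA lam) t)) * ENNReal.ofReal t⁻¹ := by
        apply setLIntegral_mono_ae' measurableSet_Ioo
        apply ae_of_all
        intro t ht
        have hsup0 : 0 ≤ sSup {r : ℝ | ∃ s ∈ Set.Ioo (0:ℝ) t, r = psi s ^ 2 * Ces f s} := by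
          apply Real.sSup_nonneg
          rintro r ⟨s, hsmem, rfl⟩
          have hces : 0 ≤ Ces f s := by
            rw [Ces]
            exact div_nonneg (setIntegral_nonneg measurableSet_Ioc (fun u _ => hf0 u))
              hsmem.1.le
          exact mul_nonneg (sq_nonneg _) hces
        rw [div_eq_mul_inv, ENNReal.ofReal_mul hsup0]
        exact mul_le_mul_left (hsup t ht) _
    _ = ∫⁻ t in Ioo (0:ℝ) 1,
          ∫⁻ lam in Ioi (0:ℝ), ENNReal.ofReal (bnd (lamA lam) t) * ENNReal.ofReal t⁻¹ := by
        apply lintegral_congr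
        intro t
        rw [← lintegral_mul_const' _ _ ENNReal.ofReal_ne_top]
    _ = ∫⁻ lam in Ioi (0:ℝ),
          ∫⁻ t in Ioo (0:ℝ) 1, ENNReal.ofReal (bnd (lamA lam) t) * ENNReal.ofReal t⁻¹ :=
        lintegral_lintegral_swap hswap_meas
    _ ≤ ∫⁻ lam in Ioi (0:ℝ), 3 * Jpsi (lamA lam) := by
        apply setLIntegral_mono_ae' measurableSet_Ioi
        apply ae_of_all
        intro lam _
        obtain ⟨hc0, hc1, _, _⟩ := hkeyA lam
        have heq : ∫⁻ t in Ioo (0:ℝ) 1, ENNReal.ofReal (bnd (lamA lam) t) * ENNReal.ofReal t⁻¹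
            = ∫⁻ t in Ioo (0:ℝ) 1, ENNReal.ofReal (bnd (lamA lam) t / t) := by
          apply setLIntegral_congr_fun measurableSet_Ioo
          intro t ht
          dsimp only
          rw [div_eq_mul_inv, ENNReal.ofReal_mul (bnd_nonneg hc0 hc1 ht.1 ht.2.le)]
        rw [heq]
        exact bnd_integral_le hc0 hc1
    _ = 3 * ∫⁻ lam in Ioi (0:ℝ), Jpsi (lamA lam) := by
        rw [← lintegral_const_mul' _ _ (by norm_num : (3:ℝ≥0∞) ≠ ⊤)]
    _ ≤ 3 * ∫⁻ lam in Ioi (0:ℝ), muPsi {u | lam < f u} :=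
        mul_le_mul_right (lintegral_mono (fun lam => hJle lam)) _
    _ = 3 * ∫⁻ s in Set.Ioo (0:ℝ) 1, ENNReal.ofReal (f s * (psi s ^ 2 / s)) := by
        rw [← hRHS2, ← hRHS1]
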